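/- Let c, γ > 0 and suppose y : [t₀, t*] → (0, e^{−1/c}] is positive, differentiable, and satisfies y'(t) ≤ (c log y(t) + 1) y(t). If c·(−log y(t₀)) > 1, then y(t) ≤ exp(−1/c) · exp( −(1/c)(c(−log y(t₀)) − 1) e^{c(t−t₀)} ) for all t ∈ [t₀, t*]; i.e., y decays at least double-exponentially in time. -/

import Mathlib

open Real Set

theorem stmt_10 (c γ t₀ tS : ℝ) (hc : 0 < c) (hγ : 0 < γ) (ht : t₀ ≤ tS)
    (y y' : ℝ → ℝ)
    (hy : ∀ t ∈ Icc t₀ tS, 0 < y t ∧ y t ≤ Real.exp (-1 / c))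
    (hderiv : ∀ t ∈ Icc t₀ tS, HasDerivAt y (y' t) t)
    (hineq : ∀ t ∈ Icc t₀ tS, y' t ≤ (c * Real.log (y t) + 1) * y t)
    (hinit : 1 < c * (-Real.log (y t₀))) :
    ∀ t ∈ Icc t₀ tS,
      y t ≤ Real.exp (-1 / c) *
        Real.exp (-(1 / c) * (c * (-Real.log (y t₀)) - 1) * Real.exp (c * (t - t₀))) := by
  set g : ℝ → ℝ := fun t => (-(Real.log (y t)) - 1/c) * Real.exp (-(c*(t - t₀))) with hg_def
  have hg : ∀ t ∈ Icc t₀ tS, HasDerivAt g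
      ((-(y' t / y t)) * Real.exp (-(c*(t - t₀)))
        + (-(Real.log (y t)) - 1/c) * (Real.exp (-(c*(t - t₀))) * (-c))) t := by
    intro t htt
    have h1 : HasDerivAt (fun s => Real.log (y s)) (y' t / y t) t :=
      (hderiv t htt).log (ne_of_gt (hy t htt).1)
    have h2 : HasDerivAt (fun s => -(Real.log (y s)) - 1/c) (-(y' t / y t)) t :=
      h1.neg.sub_const _
    have h3 : HasDerivAt (fun s => -(c*(s - t₀))) (-c) t := by
      have := (((hasDerivAt_id t).sub_const t₀).const_mul c).neg
      simp only [mul_one] at this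
      exact this
    have h4 : HasDerivAt (fun s => Real.exp (-(c*(s - t₀)))) (Real.exp (-(c*(t - t₀))) * (-c)) t :=
      h3.exp
    exact h2.mul h4
  have hderiv_nonneg : ∀ t ∈ Icc t₀ tS,
      0 ≤ (-(y' t / y t)) * Real.exp (-(c*(t - t₀)))
        + (-(Real.log (y t)) - 1/c) * (Real.exp (-(c*(t - t₀))) * (-c)) := by
    intro t htt
    have hyt := (hy t htt).1
    have hi := hineq t htt
    have hfrac : y' t / y t ≤ c * Real.log (y t) + 1 :=
      (div_le_iff₀ hyt).2 hi
    have hexp : 0 < Real.exp (-(c*(t - t₀))) := Real.exp_pos _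
    have key : 0 ≤ -(y' t / y t) + c * Real.log (y t) + 1 := by linarith
    have : (-(y' t / y t)) * Real.exp (-(c*(t - t₀)))
        + (-(Real.log (y t)) - 1/c) * (Real.exp (-(c*(t - t₀))) * (-c))
        = Real.exp (-(c*(t - t₀))) * ((-(y' t / y t)) + c * Real.log (y t) + c * (1/c)) := by
      ring
    rw [this]
    have hc1 : c * (1/c) = 1 := by field_simp
    rw [hc1]
    positivity
  have hmono : MonotoneOn g (Icc t₀ tS) := by
    apply monotoneOn_of_deriv_nonneg (convex_Icc t₀ tS)
    · exact fun t htt => ((hg t htt).continuousAt).continuousWithinAt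
    · intro t htt
      rw [interior_Icc] at htt
      exact ((hg t (Ioo_subset_Icc_self htt)).differentiableAt).differentiableWithinAt
    · intro t htt
      rw [interior_Icc] at htt
      rw [(hg t (Ioo_subset_Icc_self htt)).deriv]
      exact hderiv_nonneg t (Ioo_subset_Icc_self htt)
  intro t htt
  have ht0 : t₀ ∈ Icc t₀ tS := ⟨le_refl _, ht⟩
  have hgm := hmono ht0 htt htt.1
  have hg0 : g t₀ = -(Real.log (y t₀)) - 1/c := by
    simp [hg_def]
  rw [hg0] at hgm
  -- hgm : -(log y t₀) - 1/c ≤ (-(log (y t)) - 1/c) * exp (-(c*(t - t₀)))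
  have hE : Real.exp (-(c*(t - t₀))) = (Real.exp (c*(t - t₀)))⁻¹ := by
    rw [← Real.exp_neg]
  have hEpos : 0 < Real.exp (c*(t - t₀)) := Real.exp_pos _
  have hgm2 : (-(Real.log (y t₀)) - 1/c) * Real.exp (c*(t - t₀)) ≤ -(Real.log (y t)) - 1/c := by
    simp only [hg_def] at hgm
    rw [hE] at hgm
    have h := mul_le_mul_of_nonneg_right hgm (le_of_lt hEpos)
    rw [mul_assoc, inv_mul_cancel₀ (ne_of_gt hEpos), mul_one] at h
    linarith [h]
  have hlog : Real.log (y t) ≤ -1/c - (-(Real.log (y t₀)) - 1/c) * Real.exp (c*(t - t₀)) := by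
    have : -1/c = -(1/c) := by ring
    linarith [hgm2]
  calc y t = Real.exp (Real.log (y t)) := (Real.exp_log (hy t htt).1).symm
    _ ≤ Real.exp (-1/c - (-(Real.log (y t₀)) - 1/c) * Real.exp (c*(t - t₀))) :=
        Real.exp_le_exp.2 hlog
    _ = Real.exp (-1 / c) *
        Real.exp (-(1 / c) * (c * (-Real.log (y t₀)) - 1) * Real.exp (c * (t - t₀))) := by
        rw [← Real.exp_add]
        congr 1
        have hcne : c ≠ 0 := ne_of_gt hc
        field_simp
        ring
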